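/- Let n ≥ 1, let m and β be real numbers with 0 < m and β > m + 2, and let η be a compactly supported finite Borel measure on ℍ^n = ℝ^{2n} × ℝ for which there exists C > 0 with η(B_ℍ(p,r)) ≤ C r^β for all p ∈ ℍ^n and all r > 0. Then the Euclidean m-energy of the projected measure is finite: ∬ |π(p) − π(q)|^{−m} dη(q) dη(p) < ∞. -/

import Mathlib

open MeasureTheory Module Metric Set
open scoped ENNReal NNReal Real

noncomputable section

/-- Euclidean space `ℝ^{2n}`. -/
abbrev E (n : ℕ) : Type := EuclideanSpace ℝ (Fin (2 * n))

/-- The standard symplectic form `ω((x,y),(u,v)) = x·v − y·u` on `ℝ^{2n}`. -/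
def symp (n : ℕ) (x y : E n) : ℝ :=
  ∑ i : Fin n, (x ⟨i.1, by have := i.2; omega⟩ * y ⟨i.1 + n, by have := i.2; omega⟩ -
    x ⟨i.1 + n, by have := i.2; omega⟩ * y ⟨i.1, by have := i.2; omega⟩)

/-- A linear subspace of `ℝ^{2n}` is isotropic if the symplectic form vanishes on it. -/
def IsIsotropic (n : ℕ) (V : Submodule ℝ (E n)) : Prop :=
  ∀ v ∈ V, ∀ w ∈ V, symp n v w = 0

/-- The orthogonal projection onto a subspace, as a continuous linear endomorphism. -/
def projCLM (n : ℕ) (V : Submodule ℝ (E n)) : E n →L[ℝ] E n :=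
  V.subtypeL.comp (V.orthogonalProjectionOnto)

/-- The isotropic Grassmannian `G_h(2n,m)`, realized as the set of orthogonal projection
operators onto `m`-dimensional isotropic subspaces, inside the continuous linear
endomorphisms of `ℝ^{2n}`.  For `P` in this set, the corresponding plane `V` is
`LinearMap.range P` and the orthogonal projection `P_V` is `P` itself. -/
def grass (n m : ℕ) : Set (E n →L[ℝ] E n) :=
  {P | ∃ V : Submodule ℝ (E n), IsIsotropic n V ∧ finrank ℝ V = m ∧ P = projCLM n V}

/-- Membership in `U(n)`: a linear isometry of `ℝ^{2n}` preserving the symplectic form. -/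
def IsUnitary (n : ℕ) (g : E n ≃ₗᵢ[ℝ] E n) : Prop :=
  ∀ x y, symp n (g x) (g y) = symp n x y

/-- The action of an isometry on projection operators: `P ↦ g ∘ P ∘ g⁻¹`. -/
def conjAct (n : ℕ) (g : E n ≃ₗᵢ[ℝ] E n) (P : E n →L[ℝ] E n) : E n →L[ℝ] E n :=
  (g.toLinearIsometry.toContinuousLinearMap.comp P).comp
    g.symm.toLinearIsometry.toContinuousLinearMap

/-- `ν` is a `U(n)`-invariant Borel probability measure `μ_{2n,m}` on `G_h(2n,m)`:
a Borel measure on the space of operators giving full mass to the isotropic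
Grassmannian and invariant under the conjugation action of the unitary group.
(Probability is imposed via an `IsProbabilityMeasure` instance.) -/
def IsGrassMeasure (n m : ℕ) (ν : Measure (E n →L[ℝ] E n)) : Prop :=
  ν (grass n m) = 1 ∧
    ∀ g : E n ≃ₗᵢ[ℝ] E n, IsUnitary n g → Measure.map (conjAct n g) ν = ν

/-- The Heisenberg group `ℍ^n` as the set `ℝ^{2n} × ℝ`. -/
abbrev Heis (n : ℕ) : Type := E n × ℝ

/-- The Heisenberg group product `(z,t)*(w,s) = (z+w, t+s−½ω(z,w))`. -/
def hmul (n : ℕ) (p q : Heis n) : Heis n :=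
  (p.1 + q.1, p.2 + q.2 - symp n p.1 q.1 / 2)

/-- The Heisenberg group inverse `p⁻¹ = (−z,−t)`. -/
def hinv (n : ℕ) (p : Heis n) : Heis n := (-p.1, -p.2)

/-- The Korányi gauge `‖(z,t)‖_ℍ = (|z|⁴ + 16 t²)^{1/4}`. -/
def kgauge (n : ℕ) (p : Heis n) : ℝ := (‖p.1‖ ^ 4 + 16 * p.2 ^ 2) ^ (1/4 : ℝ)

/-- The closed Korányi ball `B_ℍ(p,r) = {q : ‖p⁻¹ * q‖_ℍ ≤ r}`. -/
def kball (n : ℕ) (p : Heis n) (r : ℝ) : Set (Heis n) :=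
  {q | kgauge n (hmul n (hinv n p) q) ≤ r}

lemma abs_apply_le_norm {n : ℕ} (x : E n) (i : Fin (2*n)) : |x i| ≤ ‖x‖ := by
  rw [EuclideanSpace.norm_eq]
  rw [show |x i| ≤ Real.sqrt (∑ j, ‖x j‖ ^ 2) ↔ |x i|^2 ≤ ∑ j, ‖x j‖ ^ 2 from Real.le_sqrt (abs_nonneg _) (Finset.sum_nonneg fun _ _ => sq_nonneg _)]
  rw [sq_abs]
  calc x i ^ 2 = ‖x i‖ ^ 2 := by rw [Real.norm_eq_abs, sq_abs]
  _ ≤ ∑ j, ‖x j‖ ^ 2 := Finset.single_le_sum (f := fun j => ‖x j‖ ^ 2) (fun j _ => sq_nonneg _) (Finset.mem_univ i)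

lemma abs_symp_le {n : ℕ} (x y : E n) : |symp n x y| ≤ 2 * n * (‖x‖ * ‖y‖) := by
  unfold symp
  calc |∑ i : Fin n, _| ≤ ∑ i : Fin n, |(x ⟨i.1, by have := i.2; omega⟩ * y ⟨i.1 + n, by have := i.2; omega⟩ -
    x ⟨i.1 + n, by have := i.2; omega⟩ * y ⟨i.1, by have := i.2; omega⟩)| := Finset.abs_sum_le_sum_abs _ _
  _ ≤ ∑ i : Fin n, 2 * (‖x‖ * ‖y‖) := by
      refine Finset.sum_le_sum fun i _ => ?_
      have h1 := abs_apply_le_norm x ⟨i.1, by have := i.2; omega⟩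
      have h2 := abs_apply_le_norm y ⟨i.1 + n, by have := i.2; omega⟩
      have h3 := abs_apply_le_norm x ⟨i.1 + n, by have := i.2; omega⟩
      have h4 := abs_apply_le_norm y ⟨i.1, by have := i.2; omega⟩
      have := abs_sub (x ⟨i.1, by have := i.2; omega⟩ * y ⟨i.1 + n, by have := i.2; omega⟩)
        (x ⟨i.1 + n, by have := i.2; omega⟩ * y ⟨i.1, by have := i.2; omega⟩)
      rw [abs_mul, abs_mul] at this
      nlinarith [abs_nonneg (x ⟨i.1, by have := i.2; omega⟩), abs_nonneg (y ⟨i.1, by have := i.2; omega⟩), abs_nonneg (x ⟨i.1 + n, by have := i.2; omega⟩), abs_nonneg (y ⟨i.1 + n, by have := i.2; omega⟩), norm_nonneg x, norm_nonneg y]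
  _ = 2 * n * (‖x‖ * ‖y‖) := by rw [Finset.sum_const, Finset.card_univ, Fintype.card_fin]; ring

lemma symp_neg_left {n : ℕ} (x y : E n) : symp n (-x) y = - symp n x y := by
  unfold symp
  rw [← Finset.sum_neg_distrib]
  exact Finset.sum_congr rfl fun i _ => by rw [PiLp.neg_apply, PiLp.neg_apply]; ring

lemma kball_mem {n : ℕ} (p q : Heis n) (ρ : ℝ) (hρ : 0 ≤ ρ)
    (h : ‖q.1 - p.1‖ ^ 4 + 16 * (q.2 - p.2 + symp n p.1 q.1 / 2) ^ 2 ≤ ρ ^ 4) :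
    q ∈ kball n p ρ := by
  have hρ4 : (ρ ^ 4 : ℝ) ^ (1/4 : ℝ) = ρ := by
    rw [← Real.rpow_natCast ρ 4, ← Real.rpow_mul hρ]; norm_num
  show kgauge n (hmul n (hinv n p) q) ≤ ρ
  rw [← hρ4]
  unfold kgauge hmul hinv
  apply Real.rpow_le_rpow (by positivity) _ (by norm_num)
  simp only [symp_neg_left]
  have h1 : ‖-p.1 + q.1‖ = ‖q.1 - p.1‖ := by rw [neg_add_eq_sub]
  rw [h1]
  have h2 : (-p.2 + q.2 - -symp n p.1 q.1 / 2) = (q.2 - p.2 + symp n p.1 q.1 / 2) := by ring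
  rw [h2]; exact h


lemma pick_k (M r u : ℝ) (hr : 0 < r) (huM : |u| ≤ M) :
    ∃ k : ℕ, k ≤ ⌈4*M/r^2⌉₊ ∧ |u - (-M + (2*(k:ℝ)+1)*(r^2/4))| ≤ r^2/4 := by
  have hh : (0:ℝ) < r^2/2 := by positivity
  obtain ⟨hu1, hu2⟩ := abs_le.1 huM
  refine ⟨⌊(u + M)/(r^2/2)⌋₊, ?_, ?_⟩
  · apply le_trans (Nat.floor_le_floor (show (u + M)/(r^2/2) ≤ 4*M/r^2 by
      rw [div_le_div_iff₀ hh (by positivity)]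
      nlinarith [sq_nonneg r])) (Nat.floor_le_ceil _)
  · have hnn : 0 ≤ (u + M)/(r^2/2) := div_nonneg (by linarith) hh.le
    have hfl : (⌊(u + M)/(r^2/2)⌋₊:ℝ) * (r^2/2) ≤ u + M := by
      calc (⌊(u + M)/(r^2/2)⌋₊:ℝ) * (r^2/2) ≤ ((u + M)/(r^2/2)) * (r^2/2) :=
            mul_le_mul_of_nonneg_right (Nat.floor_le hnn) hh.le
      _ = u + M := by field_simp
    have hfl2 : u + M < ((⌊(u + M)/(r^2/2)⌋₊:ℝ) + 1) * (r^2/2) := by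
      calc u + M = ((u + M)/(r^2/2)) * (r^2/2) := by field_simp
      _ < ((⌊(u + M)/(r^2/2)⌋₊:ℝ) + 1) * (r^2/2) :=
          mul_lt_mul_of_pos_right (Nat.lt_floor_add_one _) hh
    rw [abs_le]
    constructor <;> nlinarith

set_option maxHeartbeats 1000000 in
lemma tube_bound (n : ℕ) (β C : ℝ) (hC : 0 < C) (η : Measure (Heis n))
    (K : Set (Heis n)) (hK0 : η Kᶜ = 0)
    (hfrost : ∀ (p : Heis n) (r : ℝ), 0 < r → η (kball n p r) ≤ ENNReal.ofReal (C * r ^ β))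
    (M : ℝ) (hM : 1 ≤ M)
    (p : Heis n) (hpK : ∀ q ∈ K, |q.2 - p.2 + symp n p.1 q.1 / 2| ≤ M)
    (r : ℝ) (hr : 0 < r) (hr1 : r ≤ 1) :
    η {q | dist q.1 p.1 ≤ r} ≤ ENNReal.ofReal ((6*M*C*(2:ℝ)^(β/4 : ℝ)) * r^(β-2)) := by
  obtain ⟨N, hN⟩ : ∃ N : ℕ, N = ⌈4*M/r^2⌉₊ + 1 := ⟨_, rfl⟩
  obtain ⟨ρ, hρdef⟩ : ∃ ρ : ℝ, ρ = (2:ℝ)^((1:ℝ)/4) * r := ⟨_, rfl⟩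
  have hρpos : 0 < ρ := by rw [hρdef]; positivity
  have hρ4 : ρ^4 = 2 * r^4 := by
    rw [hρdef, mul_pow, ← Real.rpow_natCast ((2:ℝ)^((1:ℝ)/4)) 4,
      ← Real.rpow_mul (by norm_num : (0:ℝ) ≤ 2)]
    norm_num
  obtain ⟨c, hcdef⟩ : ∃ c : ℕ → Heis n,
      c = fun k : ℕ => ((p.1, p.2 + (-M + (2*(k:ℝ)+1)*(r^2/4))) : Heis n) := ⟨_, rfl⟩
  have hcov : {q | dist q.1 p.1 ≤ r} ⊆ Kᶜ ∪ ⋃ k ∈ Finset.range N, kball n (c k) ρ := by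
    intro q hq
    by_cases hqK : q ∈ K
    · right
      have huM : |q.2 - p.2 + symp n p.1 q.1 / 2| ≤ M := hpK q hqK
      obtain ⟨k, hkle, habs⟩ := pick_k M r _ hr huM
      have hkN : k ∈ Finset.range N := by rw [Finset.mem_range, hN]; omega
      refine Set.mem_biUnion hkN ?_
      apply kball_mem _ _ _ hρpos.le
      simp only [hcdef]
      rw [hρ4]
      have hd : ‖q.1 - p.1‖ ≤ r := by rw [← dist_eq_norm]; exact hq
      have h4 : ‖q.1 - p.1‖^4 ≤ r^4 := pow_le_pow_left₀ (norm_nonneg _) hd 4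
      have h16 : 16 * (q.2 - (p.2 + (-M + (2*(k:ℝ)+1)*(r^2/4))) + symp n p.1 q.1 / 2)^2
          ≤ r^4 := by
        nlinarith [sq_le_sq' (abs_le.1 habs).1 (abs_le.1 habs).2]
      linarith
    · left; exact hqK
  calc η {q | dist q.1 p.1 ≤ r} ≤ η (Kᶜ ∪ ⋃ k ∈ Finset.range N, kball n (c k) ρ) :=
        measure_mono hcov
  _ ≤ η Kᶜ + η (⋃ k ∈ Finset.range N, kball n (c k) ρ) := measure_union_le _ _
  _ ≤ 0 + ∑ k ∈ Finset.range N, η (kball n (c k) ρ) := by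
        rw [hK0]; exact add_le_add le_rfl (measure_biUnion_finset_le _ _)
  _ ≤ ∑ k ∈ Finset.range N, ENNReal.ofReal (C * ρ^β) := by
        rw [zero_add]; exact Finset.sum_le_sum fun k _ => hfrost (c k) ρ hρpos
  _ = (N : ℝ≥0∞) * ENNReal.ofReal (C * ρ^β) := by
        rw [Finset.sum_const, Finset.card_range, nsmul_eq_mul]
  _ ≤ ENNReal.ofReal ((6*M*C*(2:ℝ)^(β/4 : ℝ)) * r^(β-2)) := by
        rw [← ENNReal.ofReal_natCast, ← ENNReal.ofReal_mul (by positivity)]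
        apply ENNReal.ofReal_le_ofReal
        have hρβ : ρ^β = (2:ℝ)^(β/4 : ℝ) * r^β := by
          rw [hρdef, Real.mul_rpow (by positivity) hr.le,
            ← Real.rpow_mul (by norm_num : (0:ℝ) ≤ 2)]
          ring_nf
        have hrβ : r^β = r^(β-2) * r^2 := by
          rw [← Real.rpow_natCast r 2, ← Real.rpow_add hr]
          norm_num
        have hNle : (N:ℝ) ≤ 6*M/r^2 := by
          have h1 : (⌈4*M/r^2⌉₊ : ℝ) < 4*M/r^2 + 1 := Nat.ceil_lt_add_one (by positivity)
          have h2 : (N:ℝ) = (⌈4*M/r^2⌉₊ : ℝ) + 1 := by rw [hN]; push_cast; ring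
          have h3 : (2:ℝ) ≤ 2*M/r^2 := by
            rw [le_div_iff₀ (by positivity)]; nlinarith
          have h5 : 4*M/r^2 + 2*M/r^2 = 6*M/r^2 := by ring
          linarith
        calc (N:ℝ) * (C * ρ^β) ≤ (6*M/r^2) * (C * ρ^β) :=
              mul_le_mul_of_nonneg_right hNle (by positivity)
        _ = (6*M*C*(2:ℝ)^(β/4 : ℝ)) * r^(β-2) := by
              rw [hρβ, hrβ]; field_simp

lemma geom_pow (m : ℝ) (k : ℕ) :
    ((1/2:ℝ)^(k+1)) ^ (-m) = (2:ℝ)^(m:ℝ) * ((2:ℝ)^(m:ℝ))^k := by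
  have h2 : (0:ℝ) ≤ 2 := by norm_num
  have hhalf : ((1/2:ℝ))^(k+1) = (2:ℝ)^((-1:ℝ)*(k+1)) := by
    rw [Real.rpow_mul h2, Real.rpow_neg_one,
      show ((k:ℝ)+1) = ((k+1:ℕ):ℝ) by push_cast; ring, Real.rpow_natCast]
    norm_num
  rw [hhalf, ← Real.rpow_natCast ((2:ℝ)^(m:ℝ)) k, ← Real.rpow_mul h2, ← Real.rpow_mul h2,
    ← Real.rpow_add (by norm_num : (0:ℝ) < 2)]
  push_cast
  ring_nf

lemma pow_identity (m β : ℝ) (k : ℕ) :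
    ((2:ℝ)^(m:ℝ))^k * (((1/2:ℝ))^k)^(β-2) = ((2:ℝ)^(m-(β-2)))^k := by
  have h2 : (0:ℝ) ≤ 2 := by norm_num
  have hhalf : ((1/2:ℝ))^k = (2:ℝ)^((-1:ℝ)*k) := by
    rw [Real.rpow_mul h2, Real.rpow_neg_one, Real.rpow_natCast]
    norm_num
  rw [hhalf, ← Real.rpow_natCast ((2:ℝ)^(m:ℝ)) k, ← Real.rpow_natCast ((2:ℝ)^(m-(β-2))) k,
    ← Real.rpow_mul h2, ← Real.rpow_mul h2, ← Real.rpow_mul h2,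
    ← Real.rpow_add (by norm_num : (0:ℝ) < 2)]
  ring_nf

set_option maxHeartbeats 1000000 in
lemma inner_bound (n : ℕ) (m β C : ℝ) (hm : 0 < m) (hβ : m + 2 < β) (hC : 0 < C)
    (η : Measure (Heis n)) [IsFiniteMeasure η]
    (K : Set (Heis n)) (hK0 : η Kᶜ = 0)
    (hfrost : ∀ (p : Heis n) (r : ℝ), 0 < r → η (kball n p r) ≤ ENNReal.ofReal (C * r ^ β))
    (M : ℝ) (hM : 1 ≤ M)
    (p : Heis n) (hpK : ∀ q ∈ K, |q.2 - p.2 + symp n p.1 q.1 / 2| ≤ M) :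
    ∫⁻ q, edist p.1 q.1 ^ (-m) ∂η ≤
      η Set.univ + ENNReal.ofReal
        (∑' k : ℕ, (2:ℝ)^(m:ℝ) * (6*M*C*(2:ℝ)^(β/4:ℝ)) * ((2:ℝ)^(m-(β-2)))^k) := by
  set X : ℝ := (2:ℝ)^(m:ℝ) with hX
  set Y : ℝ := (2:ℝ)^(m-(β-2)) with hY
  set C' : ℝ := 6*M*C*(2:ℝ)^(β/4:ℝ) with hC'
  have hX1 : 1 ≤ X := Real.one_le_rpow (by norm_num) hm.le
  have hY0 : 0 < Y := Real.rpow_pos_of_pos (by norm_num) _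
  have hY1 : Y < 1 := Real.rpow_lt_one_of_one_lt_of_neg (by norm_num) (by linarith)
  have hC'0 : 0 < C' := by rw [hC']; positivity
  set S : ℕ → Set (Heis n) := fun k => {q : Heis n | dist q.1 p.1 ≤ (1/2:ℝ)^k} with hS
  set c : ℕ → ℝ≥0∞ := fun k => ENNReal.ofReal (X * X^k) with hc
  have hSmeas : ∀ k, MeasurableSet (S k) := by
    intro k
    exact measurableSet_le ((continuous_fst.dist continuous_const).measurable) measurable_const
  -- pointwise bound
  have hpt : ∀ q : Heis n, edist p.1 q.1 ^ (-m) ≤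
      1 + ∑' k : ℕ, (S k).indicator (fun _ => c k) q := by
    intro q
    have hck1 : ∀ k, 1 ≤ c k := by
      intro k
      rw [hc]
      rw [show (1:ℝ≥0∞) = ENNReal.ofReal 1 by simp]
      exact ENNReal.ofReal_le_ofReal (by nlinarith [one_le_pow₀ hX1 (n := k)])
    rcases eq_or_lt_of_le (dist_nonneg : (0:ℝ) ≤ dist p.1 q.1) with hd0 | hdpos
    · -- distance zero: RHS is ⊤
      have hmem : ∀ k, q ∈ S k := by
        intro k
        simp only [hS, Set.mem_setOf_eq, dist_comm q.1 p.1, ← hd0]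
        positivity
      have htop : (∑' k : ℕ, (S k).indicator (fun _ => c k) q) = ⊤ := by
        apply top_le_iff.1
        calc (⊤:ℝ≥0∞) = ∑' _ : ℕ, (1:ℝ≥0∞) := (ENNReal.tsum_const_eq_top_of_ne_zero one_ne_zero).symm
        _ ≤ _ := ENNReal.tsum_le_tsum fun k => by
              rw [Set.indicator_of_mem (hmem k)]; exact hck1 k
      rw [htop]
      simp
    · have hedist : edist p.1 q.1 ^ (-m) = ENNReal.ofReal ((dist p.1 q.1) ^ (-m)) := by
        rw [edist_dist, ENNReal.ofReal_rpow_of_pos hdpos]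
      rcases le_or_gt (dist p.1 q.1) 1 with hd1 | hd1
      · -- find k with (1/2)^(k+1) < d ≤ (1/2)^k
        have hex : ∃ k : ℕ, (1/2:ℝ)^(k+1) < dist p.1 q.1 := by
          obtain ⟨j, hj⟩ := exists_pow_lt_of_lt_one hdpos (by norm_num : (1/2:ℝ) < 1)
          refine ⟨j, lt_of_le_of_lt ?_ hj⟩
          rw [pow_succ]
          nlinarith [pow_nonneg (by norm_num : (0:ℝ) ≤ 1/2) j]
        set k0 := Nat.find hex with hk0
        have hlt : (1/2:ℝ)^(k0+1) < dist p.1 q.1 := Nat.find_spec hex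
        have hle : dist p.1 q.1 ≤ (1/2:ℝ)^k0 := by
          rcases Nat.eq_zero_or_pos k0 with h0 | h0
          · rw [h0]; simpa using hd1
          · have := Nat.find_min hex (m := k0 - 1) (by omega)
            push_neg at this
            have heq : k0 - 1 + 1 = k0 := by omega
            rwa [heq] at this
        have hqS : q ∈ S k0 := by
          simp only [hS, Set.mem_setOf_eq, dist_comm q.1 p.1]
          exact hle
        calc edist p.1 q.1 ^ (-m) = ENNReal.ofReal ((dist p.1 q.1) ^ (-m)) := hedist
        _ ≤ c k0 := by
            show _ ≤ ENNReal.ofReal (X * X ^ k0)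
            rw [hX, ← geom_pow]
            exact ENNReal.ofReal_le_ofReal
              (Real.rpow_le_rpow_of_nonpos (by positivity) hlt.le (by linarith))
        _ = (S k0).indicator (fun _ => c k0) q :=
            (Set.indicator_of_mem hqS (fun _ => c k0)).symm
        _ ≤ ∑' k : ℕ, (S k).indicator (fun _ => c k) q := ENNReal.le_tsum k0
        _ ≤ _ := le_add_self
      · calc edist p.1 q.1 ^ (-m) = ENNReal.ofReal ((dist p.1 q.1) ^ (-m)) := hedist
        _ ≤ 1 := by
            rw [show (1:ℝ≥0∞) = ENNReal.ofReal 1 by simp]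
            exact ENNReal.ofReal_le_ofReal
              (Real.rpow_le_one_of_one_le_of_nonpos hd1.le (by linarith))
        _ ≤ _ := le_self_add
  -- integrate
  calc ∫⁻ q, edist p.1 q.1 ^ (-m) ∂η
      ≤ ∫⁻ q, (1 + ∑' k : ℕ, (S k).indicator (fun _ => c k) q) ∂η := lintegral_mono hpt
  _ = η Set.univ + ∫⁻ q, ∑' k : ℕ, (S k).indicator (fun _ => c k) q ∂η := by
      rw [lintegral_add_left measurable_const, lintegral_const, one_mul]
  _ ≤ _ := by
      apply add_le_add le_rfl
      rw [lintegral_tsum fun k => ((measurable_const.indicator (hSmeas k)).aemeasurable)]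
      have hterm : ∀ k : ℕ, c k * η (S k) ≤ ENNReal.ofReal (X * C' * Y^k) := by
        intro k
        have hr0 : (0:ℝ) < (1/2:ℝ)^k := by positivity
        have hr1 : ((1/2:ℝ))^k ≤ 1 := pow_le_one₀ (by norm_num) (by norm_num)
        have htube := tube_bound n β C hC η K hK0 hfrost M hM p hpK _ hr0 hr1
        calc c k * η (S k) ≤ ENNReal.ofReal (X * X^k) * ENNReal.ofReal (C' * ((1/2:ℝ)^k)^(β-2)) := by
              exact mul_le_mul le_rfl htube zero_le zero_le
        _ = ENNReal.ofReal (X * X^k * (C' * ((1/2:ℝ)^k)^(β-2))) :=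
              (ENNReal.ofReal_mul (mul_nonneg (le_trans zero_le_one hX1)
                (pow_nonneg (le_trans zero_le_one hX1) k))).symm
        _ = ENNReal.ofReal (X * C' * Y^k) := by
              congr 1
              rw [hY, ← pow_identity m β k]
              ring
      calc ∑' k : ℕ, ∫⁻ q, (S k).indicator (fun _ => c k) q ∂η
          = ∑' k : ℕ, c k * η (S k) := by
            congr 1; funext k; exact lintegral_indicator_const (hSmeas k) _
      _ ≤ ∑' k : ℕ, ENNReal.ofReal (X * C' * Y^k) := ENNReal.tsum_le_tsum hterm
      _ = ENNReal.ofReal (∑' k : ℕ, X * C' * Y^k) := by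
            rw [ENNReal.ofReal_tsum_of_nonneg (fun k => by positivity)
              (Summable.mul_left _ (summable_geometric_of_lt_one hY0.le hY1))]
      _ = _ := by rw [hX, hC', hY]


set_option maxHeartbeats 1000000 in
/-- If `η` is a compactly supported finite Borel measure on `ℍ^n` with
`η(B_ℍ(p,r)) ≤ C r^β` for some `β > m + 2 > 2`, then the Euclidean `m`-energy of the
projected measure `π_#η` is finite: `∬ |π(p) − π(q)|^{−m} dη(q) dη(p) < ∞`. -/
theorem stmt15 (n : ℕ) (hn : 1 ≤ n) (m β C : ℝ) (hm : 0 < m) (hβ : m + 2 < β) (hC : 0 < C)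
    (η : Measure (Heis n)) [IsFiniteMeasure η]
    (hηc : ∃ K : Set (Heis n), IsCompact K ∧ η Kᶜ = 0)
    (hfrost : ∀ (p : Heis n) (r : ℝ), 0 < r → η (kball n p r) ≤ ENNReal.ofReal (C * r ^ β)) :
    ∫⁻ p, ∫⁻ q, edist p.1 q.1 ^ (-m) ∂η ∂η < ∞ := by
  obtain ⟨K, hKc, hK0⟩ := hηc
  obtain ⟨R, hRK⟩ := hKc.isBounded.subset_closedBall (0 : Heis n)
  set Rp : ℝ := max R 0 with hRp
  have hRp0 : 0 ≤ Rp := le_max_right _ _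
  have hbound : ∀ q ∈ K, ‖q.1‖ ≤ Rp ∧ |q.2| ≤ Rp := by
    intro q hq
    have h1 : dist q 0 ≤ R := by simpa [Metric.mem_closedBall] using hRK hq
    rw [Prod.dist_eq] at h1
    have h2 := le_trans (le_max_left _ _) h1
    have h3 := le_trans (le_max_right _ _) h1
    constructor
    · calc ‖q.1‖ = dist q.1 (0 : Heis n).1 := by simp
      _ ≤ R := h2
      _ ≤ Rp := le_max_left _ _
    · calc |q.2| = dist q.2 (0 : Heis n).2 := by
            simp [Real.dist_eq]
      _ ≤ R := h3
      _ ≤ Rp := le_max_left _ _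
  set M : ℝ := 1 + 2*Rp + n*Rp^2 with hMdef
  have hM : 1 ≤ M := by nlinarith [Nat.cast_nonneg (α := ℝ) n]
  have hpK : ∀ p ∈ K, ∀ q ∈ K, |q.2 - p.2 + symp n p.1 q.1 / 2| ≤ M := by
    intro p hp q hq
    obtain ⟨hp1, hp2⟩ := hbound p hp
    obtain ⟨hq1, hq2⟩ := hbound q hq
    have hs := abs_symp_le p.1 q.1
    have hprod : ‖p.1‖ * ‖q.1‖ ≤ Rp * Rp :=
      mul_le_mul hp1 hq1 (norm_nonneg _) hRp0
    have ht := abs_sub_abs_le_abs_sub q.2 p.2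
    have h1 : |q.2 - p.2 + symp n p.1 q.1 / 2| ≤ |q.2| + |p.2| + |symp n p.1 q.1| / 2 := by
      calc |q.2 - p.2 + symp n p.1 q.1 / 2| ≤ |q.2 - p.2| + |symp n p.1 q.1 / 2| := abs_add_le _ _
      _ ≤ (|q.2| + |p.2|) + |symp n p.1 q.1| / 2 := by
          rw [abs_div]
          exact add_le_add (abs_sub _ _) (by simp [abs_of_nonneg])
    have h2 : |symp n p.1 q.1| / 2 ≤ n * Rp^2 := by
      have : (2:ℝ) * n * (‖p.1‖ * ‖q.1‖) ≤ 2 * n * (Rp * Rp) := by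
        apply mul_le_mul_of_nonneg_left hprod
        positivity
      nlinarith
    rw [hMdef]
    linarith
  set B : ℝ≥0∞ := η Set.univ + ENNReal.ofReal
      (∑' k : ℕ, (2:ℝ)^(m:ℝ) * (6*M*C*(2:ℝ)^(β/4:ℝ)) * ((2:ℝ)^(m-(β-2)))^k) with hB
  have hae : ∀ᵐ p ∂η, p ∈ K := by
    rw [MeasureTheory.ae_iff]
    simpa [Set.compl_def] using hK0
  have hBne : B ≠ ⊤ := by
    rw [hB]
    exact ENNReal.add_ne_top.2 ⟨measure_ne_top η _, ENNReal.ofReal_ne_top⟩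
  calc ∫⁻ p, ∫⁻ q, edist p.1 q.1 ^ (-m) ∂η ∂η ≤ ∫⁻ _, B ∂η := by
        apply lintegral_mono_ae
        filter_upwards [hae] with p hp
        exact inner_bound n m β C hm hβ hC η K hK0 hfrost M hM p (hpK p hp)
  _ = B * η Set.univ := lintegral_const B
  _ < ∞ := ENNReal.mul_lt_top hBne.lt_top (measure_lt_top η _)
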